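/- arXiv:2405.17324 — 4 statements merged into one kernel-verified Lean document; each statement's English description precedes it below -/
import Mathlib

section
/- (Identifiability of the latent subspace from corrected moments) Let θ be an ℝ^{d_K}-valued random vector with mean μ_θ, covariance Λ, and E[θθᵀ] finite; let U⋆ ∈ ℝ^{d_A×d_K} be a fixed matrix with orthonormal columns and set β = U⋆θ. Let D_1 and D_2 be random symmetric d_A×d_A matrices such that D_1, D_2, and θ are mutually independent and E[D_1] = E[D_2] =: D is invertible. Let M := (1/2)(D_1ββᵀD_2 + D_2ββᵀD_1). Then D⁻¹ E[M] D⁻¹ = U⋆(Λ + μ_θμ_θᵀ)U⋆ᵀ. In particular, if λ_min(Λ) > 0, the column span of D⁻¹E[M]D⁻¹ (equivalently, the span of its top d_K eigenvectors) equals the column span of U⋆. -/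
open Matrix MeasureTheory ProbabilityTheory

instance matrixMeasurableSpace {m n : ℕ} : MeasurableSpace (Matrix (Fin m) (Fin n) ℝ) :=
  (inferInstance : MeasurableSpace (Fin m → Fin n → ℝ))

lemma posSemidef_vecMulVec_self {n : ℕ} (μ : Fin n → ℝ) : (vecMulVec μ μ).PosSemidef := by
  rw [posSemidef_iff_dotProduct_mulVec]
  constructor
  · ext i j
    simp [conjTranspose_apply, vecMulVec_apply, mul_comm]
  · intro x
    have h1 : vecMulVec μ μ *ᵥ x = fun i => μ i * (μ ⬝ᵥ x) := by
      funext i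
      simp [mulVec, vecMulVec_apply, dotProduct, Finset.mul_sum, mul_assoc]
    rw [h1]
    have h2 : star x ⬝ᵥ (fun i => μ i * (μ ⬝ᵥ x)) = (μ ⬝ᵥ x) * (μ ⬝ᵥ x) := by
      simp only [dotProduct, Finset.sum_mul, Finset.mul_sum, star_trivial]
      rw [Finset.sum_comm]
      exact Finset.sum_congr rfl fun i _ => Finset.sum_congr rfl fun j _ => by ring
    rw [h2]
    exact mul_self_nonneg _

lemma range_sandwich {dA dK : ℕ} (Ustar : Matrix (Fin dA) (Fin dK) ℝ)
    (hUstar : Ustarᵀ * Ustar = 1) (S : Matrix (Fin dK) (Fin dK) ℝ)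
    (hSdet : IsUnit S.det) :
    LinearMap.range (Ustar * S * Ustarᵀ).mulVecLin = LinearMap.range Ustar.mulVecLin := by
  apply le_antisymm
  · rintro x ⟨y, rfl⟩
    refine ⟨(S * Ustarᵀ) *ᵥ y, ?_⟩
    simp only [mulVecLin_apply, mulVec_mulVec, Matrix.mul_assoc]
  · rintro x ⟨y, rfl⟩
    refine ⟨Ustar *ᵥ (S⁻¹ *ᵥ y), ?_⟩
    have key : Ustar * S * Ustarᵀ * (Ustar * S⁻¹) = Ustar := by
      rw [Matrix.mul_assoc (Ustar * S), ← Matrix.mul_assoc Ustarᵀ, hUstar, Matrix.one_mul,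
        Matrix.mul_assoc, Matrix.mul_nonsing_inv _ hSdet, Matrix.mul_one]
    simp only [mulVecLin_apply, mulVec_mulVec]
    rw [key]

/-- **Identifiability of the latent subspace from corrected moments.** Let `θ` be an
`ℝ^{d_K}`-valued random vector with mean `μ_θ` and covariance `Λ`, let `U⋆` have orthonormal
columns and `β = U⋆ θ`. If `D₁, D₂` are random symmetric matrices with `D₁, D₂, θ` mutually
independent and `E[D₁] = E[D₂] = D` invertible, and
`M := (1/2)(D₁ββᵀD₂ + D₂ββᵀD₁)`, then `D⁻¹ E[M] D⁻¹ = U⋆(Λ + μ_θμ_θᵀ)U⋆ᵀ`; in particular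
if `λ_min(Λ) > 0`, the column span of `D⁻¹E[M]D⁻¹` equals the column span of `U⋆`. -/
theorem latent_subspace_identifiable
    {Ω : Type*} [MeasurableSpace Ω] (P : Measure Ω) [IsProbabilityMeasure P]
    {dA dK : ℕ}
    (θ : Ω → Fin dK → ℝ) (hθmeas : Measurable θ)
    (hθint : ∀ i, Integrable (fun ω => θ ω i) P)
    (hθθint : ∀ i j, Integrable (fun ω => θ ω i * θ ω j) P)
    (μθ : Fin dK → ℝ) (hμθ : ∀ i, μθ i = ∫ ω, θ ω i ∂P)
    (Λ : Matrix (Fin dK) (Fin dK) ℝ)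
    (hΛ : ∀ i j, Λ i j = ∫ ω, (θ ω i - μθ i) * (θ ω j - μθ j) ∂P)
    (Ustar : Matrix (Fin dA) (Fin dK) ℝ) (hUstar : Ustarᵀ * Ustar = 1)
    (β : Ω → Fin dA → ℝ) (hβ : ∀ ω, β ω = Ustar.mulVec (θ ω))
    (D1 D2 : Ω → Matrix (Fin dA) (Fin dA) ℝ)
    (hD1meas : Measurable D1) (hD2meas : Measurable D2)
    (hD1symm : ∀ ω, (D1 ω)ᵀ = D1 ω) (hD2symm : ∀ ω, (D2 ω)ᵀ = D2 ω)
    (hD1int : ∀ i j, Integrable (fun ω => D1 ω i j) P)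
    (hD2int : ∀ i j, Integrable (fun ω => D2 ω i j) P)
    -- mutual independence of `D₁, D₂, θ`
    (hindep1 : IndepFun D1 (fun ω => (D2 ω, θ ω)) P)
    (hindep2 : IndepFun D2 θ P)
    (D : Matrix (Fin dA) (Fin dA) ℝ)
    (hED1 : ∀ i j, D i j = ∫ ω, D1 ω i j ∂P)
    (hED2 : ∀ i j, D i j = ∫ ω, D2 ω i j ∂P)
    (hDinv : IsUnit D)
    (M : Ω → Matrix (Fin dA) (Fin dA) ℝ)
    (hM : ∀ ω, M ω = (1 / 2 : ℝ) •
      (D1 ω * vecMulVec (β ω) (β ω) * D2 ω + D2 ω * vecMulVec (β ω) (β ω) * D1 ω))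
    (hMint : ∀ i j, Integrable (fun ω => M ω i j) P)
    (EM : Matrix (Fin dA) (Fin dA) ℝ) (hEM : ∀ i j, EM i j = ∫ ω, M ω i j ∂P) :
    D⁻¹ * EM * D⁻¹ = Ustar * (Λ + vecMulVec μθ μθ) * Ustarᵀ ∧
    (Λ.PosDef →
      LinearMap.range (D⁻¹ * EM * D⁻¹).mulVecLin = LinearMap.range Ustar.mulVecLin) := by
  -- measurability of matrix entries
  have hent : ∀ i j : Fin dA, Measurable fun A : Matrix (Fin dA) (Fin dA) ℝ => A i j :=
    fun i j => (measurable_pi_apply j).comp (measurable_pi_apply i)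
  -- measurability of coordinates of `Ustar.mulVec`
  have hmvk : ∀ k : Fin dA, Measurable fun x : Fin dK → ℝ => Ustar.mulVec x k := by
    intro k
    simp only [Matrix.mulVec, dotProduct]
    exact Finset.measurable_sum _ fun m _ => (measurable_pi_apply m).const_mul _
  -- integrability of products of β coordinates
  have hββint : ∀ k l : Fin dA, Integrable (fun ω => β ω k * β ω l) P := by
    intro k l
    have heq : (fun ω => β ω k * β ω l)
        = fun ω => ∑ m, ∑ n, Ustar k m * Ustar l n * (θ ω m * θ ω n) := by
      funext ω
      simp only [hβ, Matrix.mulVec, dotProduct, Finset.sum_mul_sum]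
      exact Finset.sum_congr rfl fun m _ => Finset.sum_congr rfl fun n _ => by ring
    rw [heq]
    exact integrable_finset_sum _ fun m _ =>
      integrable_finset_sum _ fun n _ => (hθθint m n).const_mul _
  -- independence of β products and D2 entries
  have hββD2 : ∀ (k l e f : Fin dA),
      IndepFun (fun ω => β ω k * β ω l) (fun ω => D2 ω e f) P := by
    intro k l e f
    have h := (hindep2.comp (hent e f) ((hmvk k).mul (hmvk l))).symm
    have heq : (fun ω => β ω k * β ω l)
        = (fun x : Fin dK → ℝ => Ustar.mulVec x k * Ustar.mulVec x l) ∘ θ := by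
      funext ω; simp [hβ]
    rw [heq]
    exact h
  -- independence of D1 entries and (β-product × D2-entry)
  have hD1rest : ∀ (a b k l e f : Fin dA),
      IndepFun (fun ω => D1 ω a b) (fun ω => β ω k * β ω l * D2 ω e f) P := by
    intro a b k l e f
    have hψ : Measurable fun p : Matrix (Fin dA) (Fin dA) ℝ × (Fin dK → ℝ) =>
        Ustar.mulVec p.2 k * Ustar.mulVec p.2 l * p.1 e f :=
      (((hmvk k).comp measurable_snd).mul ((hmvk l).comp measurable_snd)).mul
        ((hent e f).comp measurable_fst)
    have h := hindep1.comp (hent a b) hψ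
    have heq : (fun ω => β ω k * β ω l * D2 ω e f)
        = (fun p : Matrix (Fin dA) (Fin dA) ℝ × (Fin dK → ℝ) =>
            Ustar.mulVec p.2 k * Ustar.mulVec p.2 l * p.1 e f)
          ∘ (fun ω => (D2 ω, θ ω)) := by
      funext ω; simp [hβ]
    rw [heq]
    exact h
  -- integrability of inner products
  have hinner_int : ∀ (k l e f : Fin dA),
      Integrable (fun ω => β ω k * β ω l * D2 ω e f) P :=
    fun k l e f => (hββD2 k l e f).integrable_mul (hββint k l) (hD2int e f)
  -- key: integrability and value of the full triple product
  have hkey_int : ∀ (a b k l e f : Fin dA),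
      Integrable (fun ω => D1 ω a b * (β ω k * β ω l * D2 ω e f)) P :=
    fun a b k l e f =>
      (hD1rest a b k l e f).integrable_mul (hD1int a b) (hinner_int k l e f)
  have hkey : ∀ (a b k l e f : Fin dA),
      ∫ ω, D1 ω a b * (β ω k * β ω l * D2 ω e f) ∂P
        = D a b * ((∫ ω, β ω k * β ω l ∂P) * D e f) := by
    intro a b k l e f
    have h1 : ∫ ω, D1 ω a b * (β ω k * β ω l * D2 ω e f) ∂P
        = (∫ ω, D1 ω a b ∂P) * ∫ ω, β ω k * β ω l * D2 ω e f ∂P :=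
      (hD1rest a b k l e f).integral_fun_mul_eq_mul_integral (hD1int a b).aestronglyMeasurable
        (hinner_int k l e f).aestronglyMeasurable
    have h2 : ∫ ω, β ω k * β ω l * D2 ω e f ∂P
        = (∫ ω, β ω k * β ω l ∂P) * ∫ ω, D2 ω e f ∂P :=
      (hββD2 k l e f).integral_fun_mul_eq_mul_integral (hββint k l).aestronglyMeasurable
        (hD2int e f).aestronglyMeasurable
    rw [h1, h2, ← hED1, ← hED2]
  -- the matrix B of second moments of β
  set B : Matrix (Fin dA) (Fin dA) ℝ :=
    Matrix.of (fun k l => ∫ ω, β ω k * β ω l ∂P) with hB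
  -- EM = D * B * D
  have hEMeq : EM = D * B * D := by
    ext i j
    have hMrw : ∀ ω, M ω i j = ∑ l, ∑ k,
        ((1 : ℝ) / 2) * (D1 ω i k * (β ω k * β ω l * D2 ω l j)
          + D1 ω l j * (β ω k * β ω l * D2 ω i k)) := by
      intro ω
      rw [hM]
      simp only [Matrix.smul_apply, Matrix.add_apply, Matrix.mul_apply, vecMulVec_apply,
        Finset.sum_mul, smul_eq_mul, Finset.mul_sum, ← Finset.sum_add_distrib]
      exact Finset.sum_congr rfl fun l _ => Finset.sum_congr rfl fun k _ => by ring
    have hint : ∀ l k : Fin dA, Integrable (fun ω =>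
        ((1 : ℝ) / 2) * (D1 ω i k * (β ω k * β ω l * D2 ω l j)
          + D1 ω l j * (β ω k * β ω l * D2 ω i k))) P :=
      fun l k => ((hkey_int i k k l l j).add (hkey_int l j k l i k)).const_mul _
    rw [hEM, integral_congr_ae (Filter.Eventually.of_forall hMrw),
      integral_finset_sum _ (fun l _ => integrable_finset_sum _ fun k _ => hint l k)]
    have : ∀ l : Fin dA, ∫ ω, (∑ k, ((1 : ℝ) / 2) * (D1 ω i k * (β ω k * β ω l * D2 ω l j)
          + D1 ω l j * (β ω k * β ω l * D2 ω i k))) ∂P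
        = ∑ k, D i k * B k l * D l j := by
      intro l
      rw [integral_finset_sum _ fun k _ => hint l k]
      refine Finset.sum_congr rfl fun k _ => ?_
      rw [integral_const_mul, integral_add (hkey_int i k k l l j) (hkey_int l j k l i k),
        hkey i k k l l j, hkey l j k l i k]
      simp only [hB, Matrix.of_apply]
      ring
    rw [Finset.sum_congr rfl fun l _ => this l]
    simp only [Matrix.mul_apply, Finset.sum_mul]
  -- cancel D on both sides
  have hdet : IsUnit D.det := (Matrix.isUnit_iff_isUnit_det D).1 hDinv
  have hcancel : D⁻¹ * EM * D⁻¹ = B := by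
    rw [hEMeq, Matrix.mul_assoc D B D, ← Matrix.mul_assoc D⁻¹ D (B * D),
      Matrix.nonsing_inv_mul _ hdet, Matrix.one_mul, Matrix.mul_assoc B D D⁻¹,
      Matrix.mul_nonsing_inv _ hdet, Matrix.mul_one]
  -- the second moment matrix of θ
  set C : Matrix (Fin dK) (Fin dK) ℝ :=
    Matrix.of (fun m n => ∫ ω, θ ω m * θ ω n ∂P) with hCdef
  -- B = Ustar * C * Ustarᵀ
  have hBC : B = Ustar * C * Ustarᵀ := by
    ext k l
    have heq : (fun ω => β ω k * β ω l)
        = fun ω => ∑ m, ∑ n, Ustar k m * Ustar l n * (θ ω m * θ ω n) := by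
      funext ω
      simp only [hβ, Matrix.mulVec, dotProduct, Finset.sum_mul_sum]
      exact Finset.sum_congr rfl fun m _ => Finset.sum_congr rfl fun n _ => by ring
    have hBkl : B k l = ∑ m, ∑ n, Ustar k m * Ustar l n * ∫ ω, θ ω m * θ ω n ∂P := by
      simp only [hB, Matrix.of_apply]
      rw [heq, integral_finset_sum _ fun m _ =>
        integrable_finset_sum _ fun n _ => (hθθint m n).const_mul _]
      exact Finset.sum_congr rfl fun m _ => by
        rw [integral_finset_sum _ fun n _ => (hθθint m n).const_mul _]
        exact Finset.sum_congr rfl fun n _ => integral_const_mul _ _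
    rw [hBkl]
    simp only [Matrix.mul_apply, Matrix.transpose_apply, Finset.sum_mul, Finset.mul_sum,
      hCdef, Matrix.of_apply]
    rw [Finset.sum_comm]
    exact Finset.sum_congr rfl fun n _ => Finset.sum_congr rfl fun m _ => by ring
  -- C = Λ + μθ μθᵀ
  have hC : Λ + vecMulVec μθ μθ = C := by
    ext m n
    have hexp : (fun ω => (θ ω m - μθ m) * (θ ω n - μθ n))
        = fun ω => θ ω m * θ ω n - (μθ m * θ ω n + μθ n * θ ω m - μθ m * μθ n) := by
      funext ω; ring
    have hI1 : Integrable (fun ω => μθ m * θ ω n) P := (hθint n).const_mul _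
    have hI2 : Integrable (fun ω => μθ n * θ ω m) P := (hθint m).const_mul _
    have hI3 : Integrable (fun ω => μθ m * θ ω n + μθ n * θ ω m) P := hI1.add hI2
    have hI4 : Integrable (fun ω => μθ m * θ ω n + μθ n * θ ω m - μθ m * μθ n) P :=
      hI3.sub (integrable_const _)
    have hΛ' : Λ m n = (∫ ω, θ ω m * θ ω n ∂P) - μθ m * μθ n := by
      rw [hΛ, hexp, integral_sub (hθθint m n) hI4, integral_sub hI3 (integrable_const _),
        integral_add hI1 hI2, integral_const_mul, integral_const_mul, integral_const,
        ← hμθ, ← hμθ]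
      simp only [measure_univ, ENNReal.toReal_one, smul_eq_mul, one_mul, probReal_univ, mul_one]
      ring
    simp only [Matrix.add_apply, vecMulVec_apply, hΛ', hCdef, Matrix.of_apply]
    ring
  have hmain : D⁻¹ * EM * D⁻¹ = Ustar * (Λ + vecMulVec μθ μθ) * Ustarᵀ := by
    rw [hcancel, hBC, hC]
  refine ⟨hmain, fun hP => ?_⟩
  rw [hmain]
  have hS : (Λ + vecMulVec μθ μθ).PosDef := hP.add_posSemidef (posSemidef_vecMulVec_self μθ)
  exact range_sandwich Ustar hUstar _ hS.det_pos.ne'.isUnit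
end

section
/- (Elliptical potential lemma; Lemma 'feature-square-sum-bound') Let φ_1,...,φ_T ∈ ℝ^d with ‖φ_t‖₂ ≤ 1 for all t, let μ > 0, and define V_t = μI + Σ_{s=1}^{t−1} φ_sφ_sᵀ. Then Σ_{t=1}^T min(‖φ_t‖²_{V_t⁻¹}, 1) ≤ 2 log(det(V_{T+1})/det(μI)) ≤ 2 d log(1 + T/(dμ)). -/
open Matrix

private lemma min_le_two_log' {x : ℝ} (hx : 0 ≤ x) : min x 1 ≤ 2 * Real.log (1 + x) := by
  rcases le_total x 1 with h | h
  · rw [min_eq_left h]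
    have h1 : (0:ℝ) < 1 + x := by linarith
    have h2 : Real.log (1 + x)⁻¹ ≤ (1 + x)⁻¹ - 1 := Real.log_le_sub_one_of_pos (by positivity)
    rw [Real.log_inv] at h2
    have h5 : (1+x) * (1+x)⁻¹ = 1 := mul_inv_cancel₀ h1.ne'
    nlinarith [mul_nonneg hx (sub_nonneg.2 h)]
  · rw [min_eq_right h]
    have hl : Real.log 2 ≤ Real.log (1+x) := Real.log_le_log (by norm_num) (by linarith)
    have := Real.log_two_gt_d9
    linarith

private lemma det_rank_one_update' {d : ℕ} (A : Matrix (Fin d) (Fin d) ℝ) (hA : A.PosDef)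
    (u : Fin d → ℝ) : (A + vecMulVec u u).det = A.det * (1 + u ⬝ᵥ A⁻¹ *ᵥ u) := by
  rw [vecMulVec_eq Unit, det_add_replicateCol_mul_replicateRow (isUnit_iff_ne_zero.mpr hA.det_pos.ne')]
  congr 1
  rw [← replicateRow_vecMul, det_unique]
  simp [Matrix.add_apply, Matrix.one_apply, dotProduct_mulVec]

private lemma trace_vecMulVec' {d : ℕ} (u v : Fin d → ℝ) :
    (vecMulVec u v).trace = u ⬝ᵥ v := by
  simp [Matrix.trace, Matrix.diag, vecMulVec, dotProduct]

private lemma trace_eq_sum_eigenvalues' {d : ℕ} (A : Matrix (Fin d) (Fin d) ℝ)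
    (hA : A.IsHermitian) : A.trace = ∑ i, hA.eigenvalues i := by
  nth_rewrite 1 [hA.spectral_theorem]
  rw [Unitary.conjStarAlgAut_apply, Matrix.trace_mul_cycle]
  rw [(Matrix.mem_unitaryGroup_iff').mp (hA.eigenvectorUnitary).2, one_mul, trace_diagonal]
  simp

/-- **Elliptical potential lemma.** For vectors `φ₁, ..., φ_T ∈ ℝ^d` with `‖φ_t‖₂ ≤ 1`, `μ > 0` and
`V_t = μ I + Σ_{s<t} φ_s φ_sᵀ`, we have
`Σ_t min(‖φ_t‖²_{V_t⁻¹}, 1) ≤ 2 log(det V_{T+1} / det (μ I)) ≤ 2 d log(1 + T/(dμ))`. -/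
theorem elliptical_potential {d T : ℕ} (hd : 0 < d) (μ : ℝ) (hμ : 0 < μ)
    (φ : Fin T → Fin d → ℝ)
    (hφ : ∀ t, Real.sqrt (φ t ⬝ᵥ φ t) ≤ 1)
    (V : ℕ → Matrix (Fin d) (Fin d) ℝ)
    (hV : ∀ t, V t = μ • (1 : Matrix (Fin d) (Fin d) ℝ)
        + ∑ s ∈ Finset.univ.filter (fun s : Fin T => (s : ℕ) < t), vecMulVec (φ s) (φ s)) :
    (∑ t : Fin T, min (φ t ⬝ᵥ (V t)⁻¹.mulVec (φ t)) 1)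
        ≤ 2 * Real.log ((V (T + 1)).det / (μ • (1 : Matrix (Fin d) (Fin d) ℝ)).det) ∧
    2 * Real.log ((V (T + 1)).det / (μ • (1 : Matrix (Fin d) (Fin d) ℝ)).det)
        ≤ 2 * d * Real.log (1 + T / (d * μ)) := by
  have hdR : (0:ℝ) < d := by exact_mod_cast hd
  -- positivity facts
  have hpsd : ∀ s : Fin T, (vecMulVec (φ s) (φ s)).PosSemidef := by
    intro s
    rw [vecMulVec_eq Unit]
    have h := posSemidef_self_mul_conjTranspose (replicateCol Unit (φ s))
    rwa [conjTranspose_replicateCol, star_trivial] at h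
  have hPD : ∀ t : ℕ, (V t).PosDef := by
    intro t
    rw [hV]
    apply Matrix.PosDef.add_posSemidef
    · rw [smul_one_eq_diagonal]
      exact posDef_diagonal_iff.mpr fun _ => hμ
    · exact Finset.sum_induction _ _ (fun a b ha hb => ha.add hb) .zero (fun s _ => hpsd s)
  have hdet : ∀ t : ℕ, 0 < (V t).det := fun t => (hPD t).det_pos
  have hx : ∀ t : Fin T, 0 ≤ φ t ⬝ᵥ (V (t:ℕ))⁻¹ *ᵥ φ t := by
    intro t
    have h := ((hPD t).inv).posSemidef.re_dotProduct_nonneg (φ t)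
    simpa using h
  -- determinant recursion
  have hVsucc : ∀ t : Fin T, V ((t:ℕ)+1) = V t + vecMulVec (φ t) (φ t) := by
    intro t
    have hfil : Finset.univ.filter (fun s : Fin T => (s:ℕ) < (t:ℕ)+1)
        = insert t (Finset.univ.filter fun s : Fin T => (s:ℕ) < (t:ℕ)) := by
      ext s
      simp only [Finset.mem_filter, Finset.mem_univ, true_and, Finset.mem_insert, Fin.ext_iff]
      omega
    rw [hV, hV, hfil, Finset.sum_insert (by simp)]
    abel
  have hdetstep : ∀ t : Fin T,
      (V ((t:ℕ)+1)).det = (V t).det * (1 + φ t ⬝ᵥ (V (t:ℕ))⁻¹ *ᵥ φ t) := by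
    intro t
    rw [hVsucc t, det_rank_one_update' _ (hPD t)]
  have hlog : ∀ t : Fin T, Real.log (1 + φ t ⬝ᵥ (V (t:ℕ))⁻¹ *ᵥ φ t)
      = Real.log ((V ((t:ℕ)+1)).det) - Real.log ((V (t:ℕ)).det) := by
    intro t
    rw [hdetstep t, Real.log_mul (hdet t).ne' (by linarith [hx t])]
    ring
  have htel : ∑ t : Fin T, Real.log (1 + φ t ⬝ᵥ (V (t:ℕ))⁻¹ *ᵥ φ t)
      = Real.log ((V T).det) - Real.log ((V 0).det) := by
    calc ∑ t : Fin T, Real.log (1 + φ t ⬝ᵥ (V (t:ℕ))⁻¹ *ᵥ φ t)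
        = ∑ t : Fin T, (Real.log ((V ((t:ℕ)+1)).det) - Real.log ((V (t:ℕ)).det)) :=
          Finset.sum_congr rfl fun t _ => hlog t
      _ = ∑ i ∈ Finset.range T, (Real.log ((V (i+1)).det) - Real.log ((V i).det)) :=
          Fin.sum_univ_eq_sum_range (fun i => Real.log ((V (i+1)).det) - Real.log ((V i).det)) T
      _ = _ := Finset.sum_range_sub (fun i => Real.log ((V i).det)) T
  have hV0 : V 0 = μ • (1 : Matrix (Fin d) (Fin d) ℝ) := by
    rw [hV]; simp
  have hVT : V (T+1) = V T := by
    rw [hV, hV]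
    congr 1
    apply Finset.sum_congr _ fun _ _ => rfl
    ext s
    simp only [Finset.mem_filter, Finset.mem_univ, true_and]
    have := s.isLt
    omega
  constructor
  · rw [hVT, ← hV0, Real.log_div (hdet T).ne' (hdet 0).ne', ← htel, Finset.mul_sum]
    exact Finset.sum_le_sum fun t _ => min_le_two_log' (hx t)
  · -- second inequality
    rw [hVT]
    have hH : (V T).IsHermitian := (hPD T).isHermitian
    have hlam : ∀ i, 0 < hH.eigenvalues i := (hPD T).eigenvalues_pos
    have hdetA : (V T).det = ∏ i, hH.eigenvalues i := by
      simpa using hH.det_eq_prod_eigenvalues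
    have htrA : (V T).trace = ∑ i, hH.eigenvalues i := trace_eq_sum_eigenvalues' _ hH
    have hφ2 : ∀ t : Fin T, φ t ⬝ᵥ φ t ≤ 1 := by
      intro t
      have h0 : (0:ℝ) ≤ φ t ⬝ᵥ φ t := by
        simp only [dotProduct]
        exact Finset.sum_nonneg fun i _ => mul_self_nonneg _
      nlinarith [hφ t, Real.sq_sqrt h0, Real.sqrt_nonneg (φ t ⬝ᵥ φ t)]
    have htr_le : (V T).trace ≤ d * μ + T := by
      rw [hV, trace_add, trace_smul, trace_one]
      have h1 : (∑ s ∈ Finset.univ.filter (fun s : Fin T => (s:ℕ) < T),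
          vecMulVec (φ s) (φ s)).trace
          = ∑ s ∈ Finset.univ.filter (fun s : Fin T => (s:ℕ) < T), φ s ⬝ᵥ φ s := by
        rw [Matrix.trace_sum]
        exact Finset.sum_congr rfl fun s _ => trace_vecMulVec' _ _
      rw [h1]
      have h2 : ∑ s ∈ Finset.univ.filter (fun s : Fin T => (s:ℕ) < T), φ s ⬝ᵥ φ s
          ≤ ∑ _s ∈ Finset.univ.filter (fun s : Fin T => (s:ℕ) < T), (1:ℝ) :=
        Finset.sum_le_sum fun s _ => hφ2 s
      have h3 : ∑ _s ∈ Finset.univ.filter (fun s : Fin T => (s:ℕ) < T), (1:ℝ) ≤ T := by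
        rw [Finset.sum_const, nsmul_eq_mul, mul_one]
        have : (Finset.univ.filter (fun s : Fin T => (s:ℕ) < T)).card ≤ (Finset.univ : Finset (Fin T)).card :=
          Finset.card_le_card (Finset.filter_subset _ _)
        rw [Finset.card_univ, Fintype.card_fin] at this
        exact_mod_cast this
      have h4 : μ • (Fintype.card (Fin d) : ℝ) = d * μ := by
        rw [Fintype.card_fin, smul_eq_mul]; ring
      rw [h4]
      linarith
    -- μ I determinant
    have hdetμ : (μ • (1 : Matrix (Fin d) (Fin d) ℝ)).det = μ ^ d := by
      rw [det_smul, det_one, mul_one, Fintype.card_fin]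
    rw [hdetμ]
    have h1 : (V T).det / μ ^ d = ∏ i, (hH.eigenvalues i / μ) := by
      rw [hdetA, Finset.prod_div_distrib, Finset.prod_const, Finset.card_univ, Fintype.card_fin]
    rw [h1, Real.log_prod (fun i _ => (div_pos (hlam i) hμ).ne')]
    -- Jensen
    have hjen : ∑ i, (1/(d:ℝ)) • Real.log (hH.eigenvalues i / μ)
        ≤ Real.log (∑ i, (1/(d:ℝ)) • (hH.eigenvalues i / μ)) := by
      apply (strictConcaveOn_log_Ioi.concaveOn).le_map_sum
      · intro i _; positivity
      · simp only [Finset.sum_const, Finset.card_univ, Fintype.card_fin, nsmul_eq_mul]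
        field_simp
      · intro i _
        have := hlam i
        exact div_pos this hμ
    have harg : ∑ i, (1/(d:ℝ)) • (hH.eigenvalues i / μ) = (V T).trace / (d * μ) := by
      simp only [smul_eq_mul]
      rw [← Finset.mul_sum, ← Finset.sum_div, ← htrA]
      field_simp
    have hargpos : (0:ℝ) < (V T).trace / (d * μ) := by
      rw [htrA]
      have : (0:ℝ) < ∑ i, hH.eigenvalues i :=
        Finset.sum_pos (fun i _ => hlam i) (Finset.univ_nonempty_iff.mpr ⟨⟨0, hd⟩⟩)
      positivity
    have hbound : (V T).trace / (d * μ) ≤ 1 + T / (d * μ) := by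
      rw [div_le_iff₀ (by positivity)]
      have : (1 + (T:ℝ) / (d * μ)) * (d * μ) = d * μ + T := by
        field_simp
      rw [this]
      linarith
    have hlog_le : Real.log (∑ i, (1/(d:ℝ)) • (hH.eigenvalues i / μ))
        ≤ Real.log (1 + T / (d * μ)) := by
      rw [harg]
      exact Real.log_le_log hargpos hbound
    have hfinal : ∑ i, Real.log (hH.eigenvalues i / μ) ≤ d * Real.log (1 + T / (d * μ)) := by
      have heq : ∑ i, Real.log (hH.eigenvalues i / μ)
          = d * ∑ i, (1/(d:ℝ)) • Real.log (hH.eigenvalues i / μ) := by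
        simp only [smul_eq_mul]
        rw [← Finset.mul_sum, ← mul_assoc]
        field_simp
      rw [heq]
      calc (d:ℝ) * ∑ i, (1/(d:ℝ)) • Real.log (hH.eigenvalues i / μ)
          ≤ d * Real.log (∑ i, (1/(d:ℝ)) • (hH.eigenvalues i / μ)) := by
            exact mul_le_mul_of_nonneg_left hjen (le_of_lt hdR)
        _ ≤ d * Real.log (1 + T / (d * μ)) := mul_le_mul_of_nonneg_left hlog_le (le_of_lt hdR)
    linarith
end

section
/- (Bound on the projection mismatch term κ_t when actions stay in the estimated subspace) Let Û ∈ ℝ^{d_A×d_K} have orthonormal columns, let X ∈ ℝ^{t×d_A} be a matrix whose rows lie in the column span of Û and have ℓ₂-norm at most 1, and let μ > 0. Set Y = XÛ ∈ ℝ^{t×d_K} and κ := ‖ÛᵀXᵀX‖_{(μI + ÛᵀXᵀXÛ)⁻¹}, where ‖A‖_C := √(‖Aᵀ C A‖₂). Then κ² = ‖(I − μ(μI + YᵀY)⁻¹) YᵀY‖₂ = ‖YᵀY(μI + YᵀY)⁻¹YᵀY‖₂ ≤ ‖YᵀY‖₂ ≤ t, so κ ≤ √t. -/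
open Matrix

/-- The spectral norm (largest singular value) of a real matrix. -/
noncomputable def spec {m n : ℕ} (A : Matrix (Fin m) (Fin n) ℝ) : ℝ :=
  ‖LinearMap.toContinuousLinearMap (Matrix.toEuclideanLin A)‖

/-- The weighted matrix norm `‖A‖_C := √(‖Aᵀ C A‖₂)`. -/
noncomputable def mnorm {k n : ℕ} (C : Matrix (Fin k) (Fin k) ℝ)
    (A : Matrix (Fin k) (Fin n) ℝ) : ℝ :=
  Real.sqrt (spec (Aᵀ * C * A))

open scoped Matrix.Norms.L2Operator

lemma spec_eq_norm {m n : ℕ} (A : Matrix (Fin m) (Fin n) ℝ) : spec A = ‖A‖ := rfl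

lemma norm_diag_le' {k : ℕ} {d : Fin k → ℝ} {c : ℝ} (hc : 0 ≤ c) (h : ∀ i, |d i| ≤ c) :
    ‖(Matrix.diagonal d)‖ ≤ c := by
  rw [Matrix.l2_opNorm_def]
  apply ContinuousLinearMap.opNorm_le_bound _ hc
  intro x
  simp only [LinearEquiv.trans_apply, LinearMap.coe_toContinuousLinearMap']
  rw [EuclideanSpace.norm_eq, EuclideanSpace.norm_eq]
  have hx : ∀ j, (Matrix.toEuclideanLin (Matrix.diagonal d) x) j = d j * x j := by
    intro j
    rw [Matrix.toEuclideanLin_apply]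
    simp [Matrix.mulVec_diagonal]
  calc √(∑ j, ‖(Matrix.toEuclideanLin (Matrix.diagonal d) x) j‖ ^ 2)
      ≤ √(∑ j, c ^ 2 * ‖x j‖ ^ 2) := by
        apply Real.sqrt_le_sqrt
        apply Finset.sum_le_sum
        intro j _
        rw [hx j]
        have : ‖d j * x j‖ ≤ c * ‖x j‖ := by
          rw [norm_mul]
          exact mul_le_mul_of_nonneg_right
            ((Real.norm_eq_abs _).le.trans ((Real.norm_eq_abs (d j)) ▸ h j)) (norm_nonneg _)
        calc ‖d j * x j‖ ^ 2 ≤ (c * ‖x j‖) ^ 2 := by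
              exact pow_le_pow_left₀ (norm_nonneg _) this 2
          _ = c ^ 2 * ‖x j‖ ^ 2 := by ring
    _ = c * √(∑ j, ‖x j‖ ^ 2) := by
        rw [← Finset.mul_sum, Real.sqrt_mul (sq_nonneg c), Real.sqrt_sq hc]

lemma le_norm_diag {k : ℕ} (d : Fin k → ℝ) (i : Fin k) : |d i| ≤ ‖(Matrix.diagonal d)‖ := by
  have h := Matrix.l2_opNorm_mulVec (Matrix.diagonal d) (EuclideanSpace.single i 1)
  have h1 : (Matrix.diagonal d) *ᵥ ((EuclideanSpace.single i 1 : EuclideanSpace ℝ (Fin k)) :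
      Fin k → ℝ) = Pi.single i (d i) := by
    funext j
    rw [Matrix.mulVec_diagonal]
    simp only [EuclideanSpace.single_apply, Pi.single_apply, mul_ite, mul_one, mul_zero, eq_comm]
    split <;> simp_all
  rw [h1] at h
  have h2 : ((EuclideanSpace.equiv (Fin k) ℝ).symm (Pi.single i (d i)) :
      EuclideanSpace ℝ (Fin k)) = EuclideanSpace.single i (d i) := rfl
  rw [h2, EuclideanSpace.norm_single, EuclideanSpace.norm_single] at h
  simpa using h

lemma norm_one_le' (k : ℕ) : ‖(1 : Matrix (Fin k) (Fin k) ℝ)‖ ≤ 1 := by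
  rw [← Matrix.diagonal_one]
  exact norm_diag_le' zero_le_one (fun i => by simp)

lemma aux_mul3 {x y z : ℝ} (hx0 : 0 ≤ x) (hx : x ≤ 1) (hy : 0 ≤ y) (hz0 : 0 ≤ z) (hz : z ≤ 1) :
    x * y * z ≤ y :=
  (mul_le_of_le_one_right (mul_nonneg hx0 hy) hz).trans (mul_le_of_le_one_left hy hx)

lemma norm_mul3_le {a b c d : ℕ} (A : Matrix (Fin a) (Fin b) ℝ) (B : Matrix (Fin b) (Fin c) ℝ)
    (C : Matrix (Fin c) (Fin d) ℝ) : ‖A * B * C‖ ≤ ‖A‖ * ‖B‖ * ‖C‖ :=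
  (Matrix.l2_opNorm_mul _ _).trans (mul_le_mul_of_nonneg_right (Matrix.l2_opNorm_mul A B)
    (norm_nonneg _))

lemma norm_isometry_le {a k : ℕ} {U : Matrix (Fin a) (Fin k) ℝ} (hU : Uᵀ * U = 1) : ‖U‖ ≤ 1 := by
  have ht : Uᴴ = Uᵀ := by ext i j; simp [Matrix.conjTranspose_apply]
  have h := Matrix.l2_opNorm_conjTranspose_mul_self U
  rw [ht, hU] at h
  nlinarith [norm_nonneg U, norm_one_le' k]

lemma norm_conj_rect {a k : ℕ} {U : Matrix (Fin a) (Fin k) ℝ} (hU : Uᵀ * U = 1)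
    (N : Matrix (Fin k) (Fin k) ℝ) : ‖U * N * Uᵀ‖ = ‖N‖ := by
  have ht : Uᴴ = Uᵀ := by ext i j; simp [Matrix.conjTranspose_apply]
  have hUn : ‖U‖ ≤ 1 := norm_isometry_le hU
  have hUtn : ‖Uᵀ‖ ≤ 1 := by rw [← ht, Matrix.l2_opNorm_conjTranspose]; exact hUn
  apply le_antisymm
  · exact (norm_mul3_le U N Uᵀ).trans (aux_mul3 (norm_nonneg U) hUn (norm_nonneg N)
      (norm_nonneg Uᵀ) hUtn)
  · have hN : Uᵀ * (U * N * Uᵀ) * U = N := by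
      have : Uᵀ * (U * N * Uᵀ) * U = Uᵀ * U * N * Uᵀ * U := by
        simp only [Matrix.mul_assoc]
      rw [this, hU, Matrix.one_mul, Matrix.mul_assoc, hU, Matrix.mul_one]
    conv_lhs => rw [← hN]
    exact (norm_mul3_le Uᵀ (U * N * Uᵀ) U).trans (aux_mul3 (norm_nonneg Uᵀ) hUtn
      (norm_nonneg _) (norm_nonneg U) hUn)

lemma core {k : ℕ} (μ : ℝ) (hμ : 0 < μ) {B : Matrix (Fin k) (Fin k) ℝ} (hB : B.PosSemidef) :
    ((1 : Matrix (Fin k) (Fin k) ℝ) - μ • (μ • 1 + B)⁻¹) * B = B * (μ • 1 + B)⁻¹ * B ∧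
    ‖B * (μ • 1 + B)⁻¹ * B‖ ≤ ‖B‖ ∧ ‖B‖ ≤ B.trace := by
  have hH : B.IsHermitian := hB.isHermitian
  set V : Matrix (Fin k) (Fin k) ℝ :=
    (Matrix.IsHermitian.eigenvectorUnitary hH : Matrix (Fin k) (Fin k) ℝ) with hV
  have hsv : star V * V = 1 :=
    (Matrix.mem_unitaryGroup_iff').mp (Matrix.IsHermitian.eigenvectorUnitary hH).2
  have hvs : V * star V = 1 :=
    (Matrix.mem_unitaryGroup_iff).mp (Matrix.IsHermitian.eigenvectorUnitary hH).2
  have hTU : Vᵀ = star V := by ext i j; simp [Matrix.conjTranspose_apply]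
  have hUU : Vᵀ * V = 1 := by rw [hTU]; exact hsv
  set g : Fin k → ℝ := hH.eigenvalues with hg
  have hg0 : ∀ i, 0 ≤ g i := hB.eigenvalues_nonneg
  have hgμ : ∀ i, 0 < μ + g i := fun i => by have := hg0 i; linarith
  set conj : (Fin k → ℝ) → Matrix (Fin k) (Fin k) ℝ :=
    fun f => V * Matrix.diagonal f * star V with hconj
  have conj_mul : ∀ f h : Fin k → ℝ, conj f * conj h = conj (fun i => f i * h i) := by
    intro f h
    simp only [hconj]
    calc V * Matrix.diagonal f * star V * (V * Matrix.diagonal h * star V)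
        = V * Matrix.diagonal f * (star V * V) * Matrix.diagonal h * star V := by
          simp only [Matrix.mul_assoc]
      _ = V * (Matrix.diagonal f * Matrix.diagonal h) * star V := by
          rw [hsv, Matrix.mul_one, Matrix.mul_assoc V, ← Matrix.mul_assoc V]
      _ = V * Matrix.diagonal (fun i => f i * h i) * star V := by
          rw [Matrix.diagonal_mul_diagonal]
  have conj_one : conj (fun _ => 1) = 1 := by
    simp only [hconj]
    rw [Matrix.diagonal_one, Matrix.mul_one, hvs]
  have conj_smul : ∀ (c : ℝ) (f : Fin k → ℝ), c • conj f = conj (fun i => c * f i) := by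
    intro c f
    simp only [hconj]
    rw [← Matrix.smul_mul, ← Matrix.mul_smul, ← Matrix.diagonal_smul]
    rfl
  have conj_sub : ∀ f h : Fin k → ℝ, conj f - conj h = conj (fun i => f i - h i) := by
    intro f h
    simp only [hconj]
    rw [← Matrix.sub_mul, ← Matrix.mul_sub, ← Matrix.diagonal_sub]
  have hBc : B = conj g := by
    have := hH.spectral_theorem
    simpa [hconj, RCLike.ofReal_real_eq_id] using this
  have hone : (1 : Matrix (Fin k) (Fin k) ℝ) = conj (fun _ => 1) := conj_one.symm
  have hMc : μ • (1 : Matrix (Fin k) (Fin k) ℝ) + B = conj (fun i => μ + g i) := by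
    rw [hone, conj_smul, hBc]
    simp only [hconj]
    rw [← Matrix.add_mul, ← Matrix.mul_add, ← Matrix.diagonal_add]
    simp [mul_one]
  have hMinv : (μ • (1 : Matrix (Fin k) (Fin k) ℝ) + B)⁻¹ = conj (fun i => (μ + g i)⁻¹) := by
    apply Matrix.inv_eq_right_inv
    rw [hMc, conj_mul, ← conj_one]
    refine congrArg conj ?_
    funext i
    exact mul_inv_cancel₀ (hgμ i).ne'
  have hnormc : ∀ f : Fin k → ℝ, ‖conj f‖ = ‖Matrix.diagonal f‖ := by
    intro f
    simp only [hconj, ← hTU]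
    exact norm_conj_rect hUU _
  refine ⟨?_, ?_, ?_⟩
  · rw [hMinv, hBc, hone, conj_smul, conj_sub, conj_mul, conj_mul, conj_mul]
    refine congrArg conj ?_
    funext i
    have h := (hgμ i).ne'
    field_simp
    ring
  · rw [hMinv, hBc, conj_mul, conj_mul, hnormc, hnormc]
    apply norm_diag_le' (norm_nonneg _)
    intro i
    calc |g i * (μ + g i)⁻¹ * g i| = g i * (μ + g i)⁻¹ * g i := by
          rw [abs_of_nonneg (mul_nonneg (mul_nonneg (hg0 i) (inv_nonneg.mpr (hgμ i).le)) (hg0 i))]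
      _ ≤ g i := by
          rw [mul_comm (g i) (μ + g i)⁻¹, mul_assoc, ← div_eq_inv_mul, div_le_iff₀ (hgμ i)]
          nlinarith [hg0 i, hμ]
      _ ≤ |g i| := le_abs_self _
      _ ≤ ‖Matrix.diagonal g‖ := le_norm_diag g i
  · have htr : B.trace = ∑ i, g i := by
      conv_lhs => rw [hBc]
      simp only [hconj]
      rw [Matrix.trace_mul_cycle, hsv, Matrix.one_mul, Matrix.trace_diagonal]
    rw [htr, hBc, hnormc]
    apply norm_diag_le'
    · exact Finset.sum_nonneg fun i _ => hg0 i
    · intro i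
      rw [abs_of_nonneg (hg0 i)]
      exact Finset.single_le_sum (fun j _ => hg0 j) (Finset.mem_univ i)

/-- **Bound on the projection mismatch term `κ_t` when actions stay in the estimated subspace.**
If the rows of `X` lie in the column span of the orthonormal-column matrix `Û` and have norm at
most `1`, `Y = XÛ`, and `κ := ‖ÛᵀXᵀX‖_{(μI + ÛᵀXᵀXÛ)⁻¹}`, then
`κ² = ‖(I − μ(μI + YᵀY)⁻¹)YᵀY‖₂ = ‖YᵀY(μI + YᵀY)⁻¹YᵀY‖₂ ≤ ‖YᵀY‖₂ ≤ t`, so `κ ≤ √t`. -/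
theorem kappa_bound_in_span {t dA dK : ℕ} (μ : ℝ) (hμ : 0 < μ)
    (Uhat : Matrix (Fin dA) (Fin dK) ℝ) (hUhat : Uhatᵀ * Uhat = 1)
    (X : Matrix (Fin t) (Fin dA) ℝ)
    (hspan : X * (Uhat * Uhatᵀ) = X)
    (hrows : ∀ i, Real.sqrt (X i ⬝ᵥ X i) ≤ 1)
    (Y : Matrix (Fin t) (Fin dK) ℝ) (hY : Y = X * Uhat)
    (κ : ℝ)
    (hκ : κ = mnorm ((μ • (1 : Matrix (Fin dK) (Fin dK) ℝ) + Uhatᵀ * Xᵀ * X * Uhat)⁻¹)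
      (Uhatᵀ * Xᵀ * X)) :
    κ ^ 2 = spec (((1 : Matrix (Fin dK) (Fin dK) ℝ)
          - μ • (μ • (1 : Matrix (Fin dK) (Fin dK) ℝ) + Yᵀ * Y)⁻¹) * (Yᵀ * Y)) ∧
    κ ^ 2 = spec (Yᵀ * Y * (μ • (1 : Matrix (Fin dK) (Fin dK) ℝ) + Yᵀ * Y)⁻¹ * (Yᵀ * Y)) ∧
    κ ^ 2 ≤ spec (Yᵀ * Y) ∧ spec (Yᵀ * Y) ≤ (t : ℝ) ∧ κ ≤ Real.sqrt t := by
  subst hY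
  set B : Matrix (Fin dK) (Fin dK) ℝ := (X * Uhat)ᵀ * (X * Uhat) with hBdef
  have hBrw : Uhatᵀ * Xᵀ * X * Uhat = B := by
    rw [hBdef, Matrix.transpose_mul]
    simp only [Matrix.mul_assoc]
  have hct : (X * Uhat)ᴴ = (X * Uhat)ᵀ := by ext i j; simp [Matrix.conjTranspose_apply]
  have hB : B.PosSemidef := by
    rw [hBdef, ← hct]
    exact Matrix.posSemidef_conjTranspose_mul_self _
  obtain ⟨e1, e2, e3⟩ := core μ hμ hB
  -- the transposed span condition
  have hXT : Uhat * Uhatᵀ * Xᵀ = Xᵀ := by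
    have := congrArg Matrix.transpose hspan
    rwa [Matrix.transpose_mul, Matrix.transpose_mul, Matrix.transpose_transpose] at this
  have h1 : Xᵀ * (X * Uhat) = Uhat * B := by
    calc Xᵀ * (X * Uhat) = Uhat * Uhatᵀ * Xᵀ * (X * Uhat) := by rw [hXT]
      _ = Uhat * B := by
          rw [hBdef, Matrix.transpose_mul]
          simp only [Matrix.mul_assoc]
  have hBT : Bᵀ = B := by
    calc Bᵀ = Bᴴ := by ext i j; simp [Matrix.conjTranspose_apply]
      _ = B := hB.isHermitian
  have h2 : Uhatᵀ * Xᵀ * X = B * Uhatᵀ := by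
    have h := congrArg Matrix.transpose h1
    rw [Matrix.transpose_mul, Matrix.transpose_mul, Matrix.transpose_transpose,
      Matrix.transpose_mul, hBT] at h
    simpa [Matrix.mul_assoc] using h
  -- identify the matrix inside κ
  have hAconj : (Uhatᵀ * Xᵀ * X)ᵀ * (μ • (1 : Matrix (Fin dK) (Fin dK) ℝ)
      + Uhatᵀ * Xᵀ * X * Uhat)⁻¹ * (Uhatᵀ * Xᵀ * X)
      = Uhat * (B * (μ • 1 + B)⁻¹ * B) * Uhatᵀ := by
    rw [hBrw, h2]
    have hAT : (B * Uhatᵀ)ᵀ = Uhat * B := by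
      rw [Matrix.transpose_mul, Matrix.transpose_transpose, hBT]
    rw [hAT]
    simp only [Matrix.mul_assoc]
  have hκ2 : κ ^ 2 = spec (B * (μ • 1 + B)⁻¹ * B) := by
    rw [hκ, mnorm, Real.sq_sqrt (by rw [spec_eq_norm]; exact norm_nonneg _), hAconj,
      spec_eq_norm, spec_eq_norm, norm_conj_rect hUhat]
  have hspecB_t : spec B ≤ (t : ℝ) := by
    rw [spec_eq_norm]
    refine e3.trans ?_
    have hYY : (X * Uhat) * (X * Uhat)ᵀ = X * Xᵀ := by
      rw [Matrix.transpose_mul, ← Matrix.mul_assoc, Matrix.mul_assoc X, hspan]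
    have htr : B.trace = (X * Xᵀ).trace := by
      rw [hBdef, Matrix.trace_mul_comm, hYY]
    rw [htr]
    have hdiag : ∀ i, (X * Xᵀ) i i = X i ⬝ᵥ X i := by
      intro i
      simp [Matrix.mul_apply, dotProduct, Matrix.transpose_apply]
    have hle1 : ∀ i, (X * Xᵀ) i i ≤ 1 := by
      intro i
      rw [hdiag i]
      have hd0 : 0 ≤ X i ⬝ᵥ X i :=
        Finset.sum_nonneg fun j _ => mul_self_nonneg _
      calc X i ⬝ᵥ X i = (Real.sqrt (X i ⬝ᵥ X i)) ^ 2 := (Real.sq_sqrt hd0).symm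
        _ ≤ 1 := pow_le_one₀ (Real.sqrt_nonneg _) (hrows i)
    calc (X * Xᵀ).trace = ∑ i, (X * Xᵀ) i i := by simp [Matrix.trace, Matrix.diag]
      _ ≤ ∑ _i : Fin t, (1 : ℝ) := Finset.sum_le_sum fun i _ => hle1 i
      _ = (t : ℝ) := by simp
  refine ⟨?_, ?_, ?_, ?_, ?_⟩
  · rw [e1]; exact hκ2
  · exact hκ2
  · rw [hκ2, spec_eq_norm, spec_eq_norm]; exact e2
  · exact hspecB_t
  · have hκ0 : 0 ≤ κ := by rw [hκ, mnorm]; exact Real.sqrt_nonneg _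
    have : κ ^ 2 ≤ (t : ℝ) := by
      refine le_trans ?_ hspecB_t
      rw [hκ2, spec_eq_norm, spec_eq_norm]; exact e2
    calc κ = Real.sqrt (κ ^ 2) := (Real.sqrt_sq hκ0).symm
      _ ≤ Real.sqrt t := Real.sqrt_le_sqrt this
end

section
/- (Coherence with equality in value is necessary; Lemma 'coh-equality') There exists a stateless decision process over the action set {0,1} that is exchangeable and satisfies the following weak coherence property in distribution — for any two action sequences τ, τ' of lengths H and H' sharing the same actions (a_h,...,a_k) from index h to k, the reward subsequences (Y_h,...,Y_k) and (Y'_h,...,Y'_k) are equal in distribution — but that is not coherent (the reward subsequences can fail to be equal as functions on Ω). Since the process is not coherent, it is not a latent bandit. An explicit witness: draw θ ∼ Bernoulli(1/2); if the first action is 0 then all rewards equal θ, while if the first action is 1 then the first reward equals θ and all later rewards equal 1 − θ. -/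
open MeasureTheory

/-- The index set of steps for a horizon `H ∈ ℕ ∪ {∞}`. -/
abbrev Idx (H : ℕ∞) : Type := {i : ℕ // (i : ℕ∞) < H}

/-- A stateless decision process (SDP) with sample space `Ω` and action set `A`. -/
structure SDP (Ω : Type*) (A : Type*) where
  F : (H : ℕ∞) → Ω → (Idx H → A) → Idx H → ℝ

namespace SDP

variable {Ω A : Type*}

/-- **Coherence**: any two action sequences sharing the same actions from index `h` to `k`
produce rewards that agree from index `h` to `k`, as functions on `Ω` (equality in value). -/
def Coherent (S : SDP Ω A) : Prop :=
  ∀ (H H' : ℕ∞) (τ : Idx H → A) (τ' : Idx H' → A) (h k : ℕ)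
    (hkH : (k : ℕ∞) < H) (hkH' : (k : ℕ∞) < H'),
    (∀ i (hi1 : h ≤ i) (hi2 : i ≤ k),
      τ ⟨i, lt_of_le_of_lt (Nat.cast_le.mpr hi2) hkH⟩
        = τ' ⟨i, lt_of_le_of_lt (Nat.cast_le.mpr hi2) hkH'⟩) →
    ∀ i (hi1 : h ≤ i) (hi2 : i ≤ k) (ω : Ω),
      S.F H ω τ ⟨i, lt_of_le_of_lt (Nat.cast_le.mpr hi2) hkH⟩
        = S.F H' ω τ' ⟨i, lt_of_le_of_lt (Nat.cast_le.mpr hi2) hkH'⟩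

/-- **Weak coherence (in distribution)**: any two action sequences sharing the same actions from
index `h` to `k` produce reward subsequences that are equal *in distribution*. -/
def WeakCoherent [MeasurableSpace Ω] (S : SDP Ω A) (μ : Measure Ω) : Prop :=
  ∀ (H H' : ℕ∞) (τ : Idx H → A) (τ' : Idx H' → A) (h k : ℕ)
    (hkH : (k : ℕ∞) < H) (hkH' : (k : ℕ∞) < H'),
    (∀ i (hi1 : h ≤ i) (hi2 : i ≤ k),
      τ ⟨i, lt_of_le_of_lt (Nat.cast_le.mpr hi2) hkH⟩
        = τ' ⟨i, lt_of_le_of_lt (Nat.cast_le.mpr hi2) hkH'⟩) →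
    Measure.map (fun ω => fun i : {i : ℕ // h ≤ i ∧ i ≤ k} =>
        S.F H ω τ ⟨i, lt_of_le_of_lt (Nat.cast_le.mpr i.2.2) hkH⟩) μ
      = Measure.map (fun ω => fun i : {i : ℕ // h ≤ i ∧ i ≤ k} =>
        S.F H' ω τ' ⟨i, lt_of_le_of_lt (Nat.cast_le.mpr i.2.2) hkH'⟩) μ

/-- **Exchangeability**: for any finite horizon `H`, action sequence `a` and permutation `π`,
`F_H(a ∘ π)` has the same distribution as `(F_H(a)) ∘ π`. -/
def Exchangeable [MeasurableSpace Ω] (S : SDP Ω A) (μ : Measure Ω) : Prop :=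
  ∀ (H : ℕ) (a : Idx (H : ℕ∞) → A) (π : Equiv.Perm (Idx (H : ℕ∞))),
    Measure.map (fun ω => S.F (H : ℕ∞) ω (a ∘ π)) μ
      = Measure.map (fun ω => S.F (H : ℕ∞) ω a ∘ π) μ

end SDP

noncomputable instance : MeasurableSpace (ProbabilityMeasure ℝ) := borel _

/-- An SDP `S` is a latent bandit (with respect to `μ`): there is a measurable random
measure-valued function `F : Ω → (A → P(ℝ))` such that for every horizon and action sequence
the rewards are mutually independent conditionally on `F`, and the conditional law of the
reward at step `h` given `F` is `F(a_h)`. -/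
def SDP.IsLatentBandit [mΩ : MeasurableSpace Ω] {A : Type*} (S : SDP Ω A) (μ : Measure Ω) :
    Prop :=
  ∃ F : Ω → A → ProbabilityMeasure ℝ,
    Measurable F ∧
    ∀ (H : ℕ∞) (τ : Idx H → A),
      (∀ (J : Finset (Idx H)) (f : Idx H → ℝ → ℝ),
        (∀ i, Measurable (f i)) → (∀ i, ∃ c : ℝ, ∀ y, |f i y| ≤ c) →
        (μ[fun ω => ∏ i ∈ J, f i (S.F H ω τ i) | MeasurableSpace.comap F inferInstance])
          =ᵐ[μ] fun ω =>
            ∏ i ∈ J, (μ[fun ω' => f i (S.F H ω' τ i) |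
              MeasurableSpace.comap F inferInstance]) ω) ∧
      (∀ (i : Idx H) (B : Set ℝ), MeasurableSet B →
        (μ[fun ω => Set.indicator B (fun _ => (1 : ℝ)) (S.F H ω τ i) |
            MeasurableSpace.comap F inferInstance])
          =ᵐ[μ] fun ω => (((F ω (τ i) : ProbabilityMeasure ℝ) : Measure ℝ) B).toReal)

/-! ### Auxiliary definitions for the witness -/

open scoped ENNReal

/-- The uniform (Bernoulli 1/2) measure on `Bool`. -/
noncomputable def muB : Measure Bool := (2:ℝ≥0∞)⁻¹ • (Measure.dirac true + Measure.dirac false)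

instance : IsProbabilityMeasure muB := by
  constructor
  simp [muB]
  rw [← two_mul, mul_comm, ENNReal.inv_mul_cancel] <;> norm_num

lemma map_not_muB : muB.map Bool.not = muB := by
  rw [muB, Measure.map_smul, Measure.map_add _ _ Measurable.of_discrete,
    Measure.map_dirac' Measurable.of_discrete, Measure.map_dirac' Measurable.of_discrete]
  simp [add_comm]

lemma map_xor_muB {β : Type*} [MeasurableSpace β] (φ : Bool → β) (hφ : Measurable φ)
    (c₁ c₂ : Bool) :
    muB.map (fun ω => φ (Bool.xor c₁ ω)) = muB.map (fun ω => φ (Bool.xor c₂ ω)) := by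
  have h : muB.map (fun ω => φ (!ω)) = muB.map (fun ω => φ ω) := by
    rw [show (fun ω => φ (!ω)) = φ ∘ Bool.not from rfl,
      ← Measure.map_map hφ Measurable.of_discrete, map_not_muB]
  cases c₁ <;> cases c₂ <;> simp [Bool.false_xor, Bool.true_xor, h]

/-- `θ` as a real-valued function: `θ(ω) = 1` if `ω = true`, else `0`. -/
noncomputable def thr : Bool → ℝ := fun ω => if ω then 1 else 0

/-- The witness SDP: every reward equals `θ` if the first action is `0 = false`, and `1 - θ`
if the first action is `1 = true`. -/
noncomputable def Swit : SDP Bool Bool :=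
  ⟨fun H ω τ i => thr (Bool.xor (τ ⟨0, lt_of_le_of_lt zero_le i.2⟩) ω)⟩

def tau0 : Idx (2:ℕ∞) → Bool := fun _ => false
def tau1 : Idx (2:ℕ∞) → Bool := fun i => i.1 == 0
def idx0 : Idx (2:ℕ∞) := ⟨0, by norm_num⟩
def idx1 : Idx (2:ℕ∞) := ⟨1, by norm_num⟩

lemma F_tau0 (ω : Bool) (i : Idx (2:ℕ∞)) : Swit.F 2 ω tau0 i = thr ω := by
  simp [Swit, tau0]

lemma F_tau1 (ω : Bool) : Swit.F 2 ω tau1 idx1 = thr (!ω) := by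
  simp [Swit, tau1]

lemma ind_thr (ω : Bool) :
    Set.indicator ({1} : Set ℝ) (fun _ => (1:ℝ)) (thr ω) = thr ω := by
  cases ω <;> simp [thr]

lemma ind_thr_not (ω : Bool) :
    Set.indicator ({1} : Set ℝ) (fun _ => (1:ℝ)) (thr (!ω)) = 1 - thr ω := by
  cases ω <;> simp [thr]

lemma thr_mul (ω : Bool) : thr ω * thr ω = thr ω := by cases ω <;> simp [thr]

lemma tau1_idx1 : tau1 idx1 = false := rfl

/-- **Coherence with equality in value is necessary** (Lemma `coh-equality`). There exists a
stateless decision process over the two-element action set `Bool ≃ {0,1}` that is exchangeable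
and weakly coherent (coherent merely in distribution) but not coherent; consequently it is not a
latent bandit. (An explicit witness: draw `θ ∼ Bernoulli(1/2)`; if the first action is `0` all
rewards equal `θ`, while if the first action is `1` the first reward is `θ` and all later
rewards are `1 − θ`.) -/
theorem weakly_coherent_not_coherent_exists :
    ∃ (Ω : Type) (_ : MeasurableSpace Ω) (μ : Measure Ω) (_ : IsProbabilityMeasure μ)
      (S : SDP Ω Bool),
      S.Exchangeable μ ∧ S.WeakCoherent μ ∧ ¬ S.Coherent ∧ ¬ S.IsLatentBandit μ := by
  refine ⟨Bool, inferInstance, muB, inferInstance, Swit, ?_, ?_, ?_, ?_⟩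
  · -- Exchangeable
    intro H a π
    cases H with
    | zero =>
      congr 1
      funext ω i
      exact absurd i.2 (by simp)
    | succ n =>
      have p : ((0:ℕ):ℕ∞) < ((n+1:ℕ):ℕ∞) := by exact_mod_cast Nat.succ_pos n
      rw [show (fun ω => Swit.F ((n+1:ℕ):ℕ∞) ω (a ∘ π)) =
          fun ω => (fun _ : Idx ((n+1:ℕ):ℕ∞) => thr (Bool.xor (a (π ⟨0, p⟩)) ω)) from rfl,
        show (fun ω => Swit.F ((n+1:ℕ):ℕ∞) ω a ∘ π) =
          fun ω => (fun _ : Idx ((n+1:ℕ):ℕ∞) => thr (Bool.xor (a ⟨0, p⟩) ω)) from rfl]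
      exact map_xor_muB (fun b => fun _ : Idx ((n+1:ℕ):ℕ∞) => thr b)
        Measurable.of_discrete (a (π ⟨0, p⟩)) (a ⟨0, p⟩)
  · -- WeakCoherent
    intro H H' τ τ' h k hkH hkH' _
    rw [show (fun ω => fun i : {i : ℕ // h ≤ i ∧ i ≤ k} =>
          Swit.F H ω τ ⟨i, lt_of_le_of_lt (Nat.cast_le.mpr i.2.2) hkH⟩) =
        fun ω => (fun _ : {i : ℕ // h ≤ i ∧ i ≤ k} =>
          thr (Bool.xor (τ ⟨0, lt_of_le_of_lt zero_le hkH⟩) ω)) from rfl,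
      show (fun ω => fun i : {i : ℕ // h ≤ i ∧ i ≤ k} =>
          Swit.F H' ω τ' ⟨i, lt_of_le_of_lt (Nat.cast_le.mpr i.2.2) hkH'⟩) =
        fun ω => (fun _ : {i : ℕ // h ≤ i ∧ i ≤ k} =>
          thr (Bool.xor (τ' ⟨0, lt_of_le_of_lt zero_le hkH'⟩) ω)) from rfl]
    exact map_xor_muB (fun b => fun _ : {i : ℕ // h ≤ i ∧ i ≤ k} => thr b)
      Measurable.of_discrete _ _
  · -- not Coherent
    intro hc
    have hk : ((1:ℕ):ℕ∞) < (2:ℕ∞) := by norm_num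
    have := hc 2 2 tau0 tau1 1 1 hk hk
      (by
        intro i h1 h2
        have : i = 1 := le_antisymm h2 h1
        subst this
        simp [tau0, tau1])
      1 le_rfl le_rfl true
    simp [Swit, tau0, tau1, thr] at this
  · -- not a latent bandit
    rintro ⟨L, hL, hmain⟩
    set G := MeasurableSpace.comap L inferInstance with hGdef
    have hle : G ≤ Bool.instMeasurableSpace := hL.comap_le
    haveI : (ae muB).NeBot := IsProbabilityMeasure.ae_neBot (μ := muB)
    -- conditional law of the reward at step 0 under `tau0` is `L · false`:
    have h2a := (hmain 2 tau0).2 idx0 {1} (measurableSet_singleton 1)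
    simp only [F_tau0, ind_thr, tau0] at h2a
    -- conditional law of the reward at step 1 under `tau1` is also `L · false`:
    have h2b := (hmain 2 tau1).2 idx1 {1} (measurableSet_singleton 1)
    simp only [F_tau1, ind_thr_not, tau1_idx1] at h2b
    -- conditional independence of rewards at steps 0 and 1 under `tau0`:
    have hne : idx0 ≠ idx1 := by
      intro hh
      exact absurd (congrArg Subtype.val hh) (by simp [idx0, idx1])
    have h3 := (hmain 2 tau0).1 {idx0, idx1} (fun _ => Set.indicator {1} (fun _ => 1))
      (fun _ => measurable_const.indicator (measurableSet_singleton 1))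
      (fun _ => ⟨1, fun y => by
        by_cases hy : y ∈ ({1} : Set ℝ) <;> simp [Set.indicator_apply, hy]⟩)
    simp only [Finset.prod_pair hne, F_tau0, ind_thr, thr_mul] at h3
    -- conditional expectation of `1 - thr`:
    have hint1 : Integrable (fun _ : Bool => (1:ℝ)) muB := .of_finite
    have hint2 : Integrable (fun ω => thr ω) muB := .of_finite
    have hsub0 := condExp_sub (m := G) (μ := muB) hint1 hint2
    rw [show (fun _ : Bool => (1:ℝ)) - (fun ω => thr ω) = fun ω => 1 - thr ω from rfl] at hsub0
    have hconst := condExp_const (μ := muB) hle (1:ℝ)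
    have hsub : muB[fun ω => 1 - thr ω|G] =ᵐ[muB]
        fun ω => 1 - (muB[fun ω => thr ω|G]) ω := by
      filter_upwards [hsub0] with ω hω
      rw [hω, Pi.sub_apply, hconst]
    obtain ⟨ω, hA, hB, hS, hP⟩ := (h2a.and (h2b.and (hsub.and h3))).exists
    dsimp only at hA hB hS hP
    nlinarith [hA, hB, hS, hP]
end
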